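/- For a word w over an ordered alphabet with |w| > 1, the following are equivalent: (i) w < vu for every non-trivial factorisation w = uv; (ii) w < v for every proper non-empty suffix v of w. -/

import Mathlib

private lemma lex_append_or_prefix {α : Type*} [LinearOrder α] :
    ∀ {x y : List α}, List.Lex (· < ·) x y →
      (∀ s t : List α, List.Lex (· < ·) (x ++ s) (y ++ t)) ∨ x <+: y := by
  intro x y h
  induction h with
  | nil => exact Or.inr (List.nil_prefix)
  | @cons a l₁ l₂ h ih =>
      rcases ih with ih | ih
      · exact Or.inl fun s t => List.Lex.cons (ih s t)
      · obtain ⟨t, rfl⟩ := ih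
        exact Or.inr ⟨t, rfl⟩
  | rel h => exact Or.inl fun s t => List.Lex.rel h

private lemma lex_of_append_left {α : Type*} [LinearOrder α] :
    ∀ (s : List α) {t₁ t₂ : List α},
      List.Lex (· < ·) (s ++ t₁) (s ++ t₂) → List.Lex (· < ·) t₁ t₂ := by
  intro s
  induction s with
  | nil => intro t₁ t₂ h; exact h
  | cons a s ih => intro t₁ t₂ h; exact ih (List.lex_cons_iff.mp h)

/-- For a word `w` with `|w| > 1` over an ordered alphabet, the following are
equivalent: (i) `w < v ++ u` for every non-trivial factorisation `w = u ++ v`;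
(ii) `w < v` for every proper non-empty suffix `v` of `w`. -/
theorem lyndon_rotation_iff_suffix {α : Type*} [LinearOrder α]
    (w : List α) (hw : 1 < w.length) :
    (∀ u v : List α, u ≠ [] → v ≠ [] → u ++ v = w → List.Lex (· < ·) w (v ++ u)) ↔
    (∀ v : List α, v ≠ [] → v ≠ w → v <:+ w → List.Lex (· < ·) w v) := by
  constructor
  · intro hi v hv hvw hsuf
    obtain ⟨u, hu⟩ := hsuf
    have hune : u ≠ [] := by
      rintro rfl; exact hvw hu
    have h1 : List.Lex (· < ·) w (v ++ u) := hi u v hune hv hu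
    haveI : IsTrichotomous α (· < ·) := ⟨fun a b h1 h2 => le_antisymm (not_lt.mp h2) (not_lt.mp h1)⟩
    rcases trichotomous_of (List.Lex (· < ·)) w v with h | h | h
    · exact h
    · exact absurd h.symm hvw
    · -- Lex v w; derive contradiction
      exfalso
      rcases lex_append_or_prefix h with hl | hp
      · have := hl u []
        rw [List.append_nil] at this
        exact asymm h1 this
      · -- v <+: w, w = v ++ t
        obtain ⟨t, ht⟩ := hp
        have htne : t ≠ [] := by
          rintro rfl; rw [List.append_nil] at ht; exact hvw ht
        have h2 : List.Lex (· < ·) w (t ++ v) := hi v t hv htne ht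
        have h3 : List.Lex (· < ·) t u := by
          apply lex_of_append_left v
          rw [← ht] at h1; exact h1
        rcases lex_append_or_prefix h3 with hl | hp2
        · have := hl v v
          rw [hu] at this
          exact asymm h2 this
        · -- t <+: u, but lengths equal
          have hlen : t.length = u.length := by
            have e1 : u.length + v.length = w.length := by
              rw [← hu, List.length_append]
            have e2 : v.length + t.length = w.length := by
              rw [← ht, List.length_append]
            omega
          have : t = u := List.IsPrefix.eq_of_length hp2 hlen
          subst this
          exact asymm h3 h3
  · intro hii u v hu hv huv
    have hvw : v ≠ w := by
      intro h
      have : u.length + v.length = w.length := by rw [← huv, List.length_append]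
      have : u.length = 0 := by rw [h] at this; omega
      exact hu (List.length_eq_zero_iff.mp this)
    have : List.Lex (· < ·) w v := hii v hv hvw ⟨u, huv⟩
    exact List.Lex.append_right _ u this
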